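/- Let M be a von Neumann algebra on a Hilbert space H, T ∈ M dominated by a gauge p, and L a Banach limit. Define E_{L,T} : M → M by ⟨E_{L,T}(X)x, y⟩ = L({⟨X T^n x, T^n y⟩ / p(n)^2}_n) for x,y ∈ H. Then E_{L,T} is a completely positive bounded linear map on M. -/

import Mathlib

noncomputable section

/-- A complex sequence is bounded. -/
def IsBoundedSeq (u : ℕ → ℂ) : Prop := ∃ C : ℝ, ∀ n, ‖u n‖ ≤ C

/-- Almost convergence (Lorentz) of a complex sequence: the Cesàro averages
`(1/(n+1)) ∑_{i=k}^{k+n} u i` converge to `c` uniformly in `k`. -/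
def AlmostConvergentC (u : ℕ → ℂ) (c : ℂ) : Prop :=
  ∀ ε : ℝ, 0 < ε → ∃ N : ℕ, ∀ n ≥ N, ∀ k : ℕ,
    ‖(∑ i ∈ Finset.range (n + 1), u (k + i)) / ((n : ℂ) + 1) - c‖ < ε

/-- Almost convergence (Lorentz) of a real sequence. -/
def AlmostConvergentR (u : ℕ → ℝ) (c : ℝ) : Prop :=
  ∀ ε : ℝ, 0 < ε → ∃ N : ℕ, ∀ n ≥ N, ∀ k : ℕ,
    |(∑ i ∈ Finset.range (n + 1), u (k + i)) / ((n : ℝ) + 1) - c| < ε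

/-- A Banach limit: a shift-invariant positive linear functional on `ℓ^∞(ℕ, ℂ)`
with `L(1) = 1 = ‖L‖`. -/
structure BanachLimit where
  toFun : (ℕ → ℂ) → ℂ
  map_add' : ∀ u v : ℕ → ℂ, IsBoundedSeq u → IsBoundedSeq v →
    toFun (u + v) = toFun u + toFun v
  map_smul' : ∀ (a : ℂ) (u : ℕ → ℂ), IsBoundedSeq u → toFun (a • u) = a * toFun u
  norm_le' : ∀ (u : ℕ → ℂ) (C : ℝ), (∀ n, ‖u n‖ ≤ C) → ‖toFun u‖ ≤ C
  map_one' : toFun (fun _ => 1) = 1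
  shift' : ∀ u : ℕ → ℂ, IsBoundedSeq u → toFun (fun n => u (n + 1)) = toFun u
  pos' : ∀ u : ℕ → ℂ, (∀ n, ∃ r : ℝ, 0 ≤ r ∧ u n = (r : ℂ)) →
    ∃ r : ℝ, 0 ≤ r ∧ toFun u = (r : ℂ)

/-- A gauge with constant `c`: `p : ℕ → (0,∞)` with `p(n+1)/p(n)` strongly almost
convergent to `c > 0`. -/
def IsGauge (p : ℕ → ℝ) (c : ℝ) : Prop :=
  (∀ n, 0 < p n) ∧ 0 < c ∧ AlmostConvergentR (fun n => |p (n + 1) / p n - c|) 0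

variable {H : Type*} [NormedAddCommGroup H] [InnerProductSpace ℂ H] [CompleteSpace H]

/-- Positivity of a matrix of operators `[A i j]` acting on `H ⊕ ⋯ ⊕ H`. -/
def MatrixIsPos {k : ℕ} (A : Matrix (Fin k) (Fin k) (H →L[ℂ] H)) : Prop :=
  ∀ x : Fin k → H, ∃ r : ℝ, 0 ≤ r ∧
    (∑ i, ∑ j, (inner ℂ (x i) (A i j (x j)) : ℂ)) = (r : ℂ)

/-- Ultraweak (σ-weak) continuity of a functional on `B(H)`:
`l(A) = ∑ ⟨A xᵢ, yᵢ⟩` with `∑ ‖xᵢ‖² < ∞`, `∑ ‖yᵢ‖² < ∞`. -/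
def UWContinuousFunctional (l : (H →L[ℂ] H) → ℂ) : Prop :=
  ∃ x y : ℕ → H, Summable (fun i => ‖x i‖ ^ 2) ∧ Summable (fun i => ‖y i‖ ^ 2) ∧
    ∀ A : H →L[ℂ] H, HasSum (fun i => (inner ℂ (y i) (A (x i)) : ℂ)) (l A)

/-- `τ` is a faithful normal trace on the von Neumann algebra `M`. -/
def IsFiniteTrace (M : VonNeumannAlgebra H) (τ : (H →L[ℂ] H) →ₗ[ℂ] ℂ) : Prop :=
  (∀ A ∈ M, ∀ B ∈ M, τ (A * B) = τ (B * A)) ∧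
  (∀ A ∈ M, A.IsPositive → ∃ r : ℝ, 0 ≤ r ∧ τ A = (r : ℂ)) ∧
  (∀ A ∈ M, A.IsPositive → τ A = 0 → A = 0) ∧
  UWContinuousFunctional (fun A => τ A)


lemma IsBoundedSeq.finsum {ι : Type*} (s : Finset ι) (f : ι → ℕ → ℂ)
    (hb : ∀ i ∈ s, IsBoundedSeq (f i)) :
    IsBoundedSeq (fun n => ∑ i ∈ s, f i n) := by
  classical
  choose C hC using fun (i : s) => hb i i.2
  refine ⟨∑ i ∈ s.attach, C i, fun n => ?_⟩
  simp only []
  rw [show (∑ i ∈ s, f i n) = ∑ i ∈ s.attach, f (↑i) n from (Finset.sum_attach s _).symm]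
  exact (norm_sum_le _ _).trans (Finset.sum_le_sum fun i _ => hC i n)

lemma BanachLimit.map_zero (L : BanachLimit) : L.toFun (fun _ => 0) = 0 := by
  have h := L.map_smul' 0 (fun _ => 0) ⟨0, fun n => by simp⟩
  simp at h; exact h

lemma BanachLimit.map_finsum (L : BanachLimit) {ι : Type*} (s : Finset ι)
    (f : ι → ℕ → ℂ) (hb : ∀ i ∈ s, IsBoundedSeq (f i)) :
    L.toFun (fun n => ∑ i ∈ s, f i n) = ∑ i ∈ s, L.toFun (f i) := by
  classical
  revert hb
  induction s using Finset.induction_on with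
  | empty => intro _; simpa using L.map_zero
  | @insert a s ha ih =>
    intro hb
    have hba : IsBoundedSeq (f a) := hb a (Finset.mem_insert_self a s)
    have hbs : ∀ i ∈ s, IsBoundedSeq (f i) := fun i hi => hb i (Finset.mem_insert_of_mem hi)
    have h1 : (fun n => ∑ i ∈ insert a s, f i n) = f a + fun n => ∑ i ∈ s, f i n := by
      funext n; simp [Finset.sum_insert ha]
    rw [h1, L.map_add' _ _ hba (IsBoundedSeq.finsum s f hbs), ih hbs, Finset.sum_insert ha]

/-- `E_{L,T}`, defined by `⟨E_{L,T}(X)x, y⟩ = L({⟨X Tⁿx, Tⁿy⟩/p(n)²})`, is a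
completely positive bounded linear map on `M`. -/
theorem E_LT_completelyPositive
    {H : Type*} [NormedAddCommGroup H] [InnerProductSpace ℂ H] [CompleteSpace H]
    [TopologicalSpace.SeparableSpace H]
    (M : VonNeumannAlgebra H) (T : H →L[ℂ] H) (hT : T ∈ M)
    (p : ℕ → ℝ) (c : ℝ) (hp : IsGauge p c)
    (hdom : ∀ n : ℕ, 1 ≤ n → ‖T ^ n‖ ≤ p n)
    (L : BanachLimit)
    (E : (H →L[ℂ] H) → (H →L[ℂ] H))
    (hE : ∀ (X : H →L[ℂ] H) (x y : H),
      (inner ℂ y (E X x) : ℂ) =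
        L.toFun (fun n => (inner ℂ ((T ^ n) y) (X ((T ^ n) x)) : ℂ) / ((p n : ℂ) ^ 2))) :
    IsLinearMap ℂ E ∧ (∃ C : ℝ, ∀ X : H →L[ℂ] H, ‖E X‖ ≤ C * ‖X‖) ∧
      (∀ X ∈ M, E X ∈ M) ∧
      ∀ (k : ℕ) (A : Matrix (Fin k) (Fin k) (H →L[ℂ] H)),
        (∀ i j, A i j ∈ M) → MatrixIsPos A → MatrixIsPos (A.map E) := by
  classical
  obtain ⟨hp_pos, hc, _⟩ := hp
  set K : ℝ := max 1 ((p 0) ^ 2)⁻¹ with hKdef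
  have hK1 : (1 : ℝ) ≤ K := le_max_left _ _
  have hK0 : (0 : ℝ) ≤ K := zero_le_one.trans hK1
  have hKp : ((p 0) ^ 2)⁻¹ ≤ K := le_max_right _ _
  -- uniform bound on the defining sequences
  have hbound : ∀ (X : H →L[ℂ] H) (x y : H) (n : ℕ),
      ‖(inner ℂ ((T ^ n) y) (X ((T ^ n) x)) : ℂ) / ((p n : ℂ) ^ 2)‖
        ≤ K * (‖X‖ * ‖x‖ * ‖y‖) := by
    intro X x y n
    have hpn : 0 < p n := hp_pos n
    have hden : ‖((p n : ℂ) ^ 2)‖ = (p n) ^ 2 := by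
      rw [norm_pow, Complex.norm_real, Real.norm_eq_abs, abs_of_pos hpn]
    rw [norm_div, hden, div_le_iff₀ (pow_pos hpn 2)]
    have hip : ‖(inner ℂ ((T ^ n) y) (X ((T ^ n) x)) : ℂ)‖
        ≤ ‖(T ^ n) y‖ * (‖X‖ * ‖(T ^ n) x‖) :=
      (norm_inner_le_norm _ _).trans
        (mul_le_mul_of_nonneg_left (X.le_opNorm _) (norm_nonneg _))
    rcases Nat.eq_zero_or_pos n with hn | hn
    · subst hn
      simp only [pow_zero, ContinuousLinearMap.one_apply] at hip ⊢
      have h0 : 0 < (p 0) ^ 2 := pow_pos hpn 2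
      have h1 : ((p 0) ^ 2)⁻¹ * (p 0) ^ 2 = 1 := inv_mul_cancel₀ (ne_of_gt h0)
      have hS0 : 0 ≤ ‖X‖ * ‖x‖ * ‖y‖ := by positivity
      calc ‖(inner ℂ y (X x) : ℂ)‖ ≤ ‖y‖ * (‖X‖ * ‖x‖) := hip
        _ = (((p 0) ^ 2)⁻¹ * (p 0) ^ 2) * (‖X‖ * ‖x‖ * ‖y‖) := by rw [h1]; ring
        _ = ((p 0) ^ 2)⁻¹ * (‖X‖ * ‖x‖ * ‖y‖) * (p 0) ^ 2 := by ring
        _ ≤ K * (‖X‖ * ‖x‖ * ‖y‖) * (p 0) ^ 2 :=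
            mul_le_mul_of_nonneg_right (mul_le_mul_of_nonneg_right hKp hS0) h0.le
    · have hTx : ‖(T ^ n) x‖ ≤ p n * ‖x‖ :=
        ((T ^ n).le_opNorm x).trans
          (mul_le_mul_of_nonneg_right (hdom n hn) (norm_nonneg _))
      have hTy : ‖(T ^ n) y‖ ≤ p n * ‖y‖ :=
        ((T ^ n).le_opNorm y).trans
          (mul_le_mul_of_nonneg_right (hdom n hn) (norm_nonneg _))
      have hXTx : ‖X‖ * ‖(T ^ n) x‖ ≤ ‖X‖ * (p n * ‖x‖) :=
        mul_le_mul_of_nonneg_left hTx (norm_nonneg _)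
      have h2 : ‖(inner ℂ ((T ^ n) y) (X ((T ^ n) x)) : ℂ)‖
          ≤ (p n * ‖y‖) * (‖X‖ * (p n * ‖x‖)) :=
        hip.trans (mul_le_mul hTy hXTx
          (mul_nonneg (norm_nonneg _) (norm_nonneg _)) (by positivity))
      have hS0 : 0 ≤ ‖X‖ * ‖x‖ * ‖y‖ := by positivity
      calc ‖(inner ℂ ((T ^ n) y) (X ((T ^ n) x)) : ℂ)‖
          ≤ (p n * ‖y‖) * (‖X‖ * (p n * ‖x‖)) := h2
        _ = 1 * (‖X‖ * ‖x‖ * ‖y‖) * (p n) ^ 2 := by ring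
        _ ≤ K * (‖X‖ * ‖x‖ * ‖y‖) * (p n) ^ 2 :=
            mul_le_mul_of_nonneg_right (mul_le_mul_of_nonneg_right hK1 hS0) (sq_nonneg _)
  -- boundedness of E
  have hEbound : ∀ X : H →L[ℂ] H, ‖E X‖ ≤ K * ‖X‖ := by
    intro X
    refine ContinuousLinearMap.opNorm_le_bound _ (by positivity) fun x => ?_
    have h1 : ‖(inner ℂ (E X x) (E X x) : ℂ)‖ ≤ K * (‖X‖ * ‖x‖ * ‖E X x‖) := by
      rw [hE]
      exact L.norm_le' _ _ (fun n => hbound X x (E X x) n)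
    have h2 : ‖(inner ℂ (E X x) (E X x) : ℂ)‖ = ‖E X x‖ ^ 2 := by
      rw [inner_self_eq_norm_sq_to_K]
      simp
    rw [h2] at h1
    nlinarith [norm_nonneg (E X x), norm_nonneg x, norm_nonneg X,
      mul_nonneg (mul_nonneg hK0 (norm_nonneg X)) (norm_nonneg x)]
  -- linearity of E
  have hlin : IsLinearMap ℂ E := by
    constructor
    · intro X Y
      refine ContinuousLinearMap.ext fun x => ?_
      refine ext_inner_left ℂ fun y => ?_
      rw [ContinuousLinearMap.add_apply, inner_add_right, hE, hE, hE,
        ← L.map_add' _ _ ⟨_, hbound X x y⟩ ⟨_, hbound Y x y⟩]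
      congr 1
      funext n
      simp only [Pi.add_apply, ContinuousLinearMap.add_apply, inner_add_right, add_div]
    · intro a X
      refine ContinuousLinearMap.ext fun x => ?_
      refine ext_inner_left ℂ fun y => ?_
      rw [ContinuousLinearMap.smul_apply, inner_smul_right, hE, hE,
        ← L.map_smul' a _ ⟨_, hbound X x y⟩]
      congr 1
      funext n
      simp only [Pi.smul_apply, smul_eq_mul, ContinuousLinearMap.smul_apply,
        inner_smul_right, mul_div_assoc]
  -- E maps M into M
  have hmem : ∀ X ∈ M, E X ∈ M := by
    intro X hX
    rw [← M.commutant_commutant, VonNeumannAlgebra.mem_commutant_iff]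
    intro S hS
    have hS' : star S ∈ M.commutant := star_mem hS
    have hTS' : ∀ n : ℕ, (T ^ n) * star S = star S * (T ^ n) := fun n =>
      (VonNeumannAlgebra.mem_commutant_iff.mp hS') (T ^ n) (pow_mem hT n)
    have hTS : ∀ n : ℕ, (T ^ n) * S = S * (T ^ n) := fun n =>
      (VonNeumannAlgebra.mem_commutant_iff.mp hS) (T ^ n) (pow_mem hT n)
    have hXS : X * S = S * X := (VonNeumannAlgebra.mem_commutant_iff.mp hS) X hX
    refine ContinuousLinearMap.ext fun x => ?_
    refine ext_inner_left ℂ fun y => ?_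
    rw [ContinuousLinearMap.mul_apply, ContinuousLinearMap.mul_apply]
    have hadj : ∀ v : H, (inner ℂ y (S v) : ℂ) = inner ℂ ((star S) y) v := by
      intro v
      rw [ContinuousLinearMap.star_eq_adjoint, ContinuousLinearMap.adjoint_inner_left]
    rw [hadj, hE, hE]
    congr 1
    funext n
    congr 1
    have e1 : (T ^ n) ((star S) y) = (star S) ((T ^ n) y) := by
      have := DFunLike.congr_fun (hTS' n) y
      simpa [ContinuousLinearMap.mul_apply] using this
    have e2 : S ((T ^ n) x) = (T ^ n) (S x) := by
      have := DFunLike.congr_fun (hTS n) x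
      simpa [ContinuousLinearMap.mul_apply] using this.symm
    have e3 : ∀ v : H, S (X v) = X (S v) := by
      intro v
      have := DFunLike.congr_fun hXS v
      simpa [ContinuousLinearMap.mul_apply] using this.symm
    calc (inner ℂ ((T ^ n) ((star S) y)) (X ((T ^ n) x)) : ℂ)
        = inner ℂ ((star S) ((T ^ n) y)) (X ((T ^ n) x)) := by rw [e1]
      _ = inner ℂ ((T ^ n) y) (S (X ((T ^ n) x))) := by
          rw [ContinuousLinearMap.star_eq_adjoint, ContinuousLinearMap.adjoint_inner_left]
      _ = inner ℂ ((T ^ n) y) (X ((T ^ n) (S x))) := by rw [e3, e2]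
  -- complete positivity
  refine ⟨hlin, ⟨K, hEbound⟩, hmem, ?_⟩
  intro k A _ hpos x
  set f : Fin k → Fin k → ℕ → ℂ := fun i j n =>
    (inner ℂ ((T ^ n) (x i)) ((A i j) ((T ^ n) (x j))) : ℂ) / ((p n : ℂ) ^ 2) with hf
  have hfb : ∀ i j, IsBoundedSeq (f i j) := fun i j =>
    ⟨_, fun n => hbound (A i j) (x j) (x i) n⟩
  have hval : (∑ i, ∑ j, (inner ℂ (x i) ((A.map E) i j (x j)) : ℂ))
      = L.toFun (fun n => ∑ i, ∑ j, f i j n) := by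
    rw [L.map_finsum _ _ (fun i _ => IsBoundedSeq.finsum _ _ (fun j _ => hfb i j))]
    refine Finset.sum_congr rfl fun i _ => ?_
    rw [L.map_finsum _ _ (fun j _ => hfb i j)]
    refine Finset.sum_congr rfl fun j _ => ?_
    rw [Matrix.map_apply, hE]
  rw [hval]
  have hpointwise : ∀ n : ℕ, ∃ r : ℝ, 0 ≤ r ∧
      (∑ i, ∑ j, f i j n) = (r : ℂ) := by
    intro n
    obtain ⟨r, hr0, hr⟩ := hpos (fun i => (T ^ n) (x i))
    refine ⟨r / (p n) ^ 2, div_nonneg hr0 (pow_pos (hp_pos n) 2).le, ?_⟩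
    have : (∑ i, ∑ j, f i j n)
        = (∑ i, ∑ j, (inner ℂ ((T ^ n) (x i)) ((A i j) ((T ^ n) (x j))) : ℂ))
          / ((p n : ℂ) ^ 2) := by
      simp only [hf, ← Finset.sum_div]
    rw [this, hr]
    push_cast
    ring
  obtain ⟨r, hr0, hr⟩ := L.pos' _ hpointwise
  exact ⟨r, hr0, hr⟩
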